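/- arXiv:math/0504190 — 2 statements merged into one kernel-verified Lean document; each statement's English description precedes it below -/
import Mathlib

section
/- Let μ > 1 and let J₀(μ) be the Jacobi operator on ℓ²(ℕ₀) acting by (J₀(μ)C)_n = d_{n+1}C_{n+1} + (2n+1)μ C_n + d_n C_{n−1} with d_n = n^{1/2}(n²−1/4)^{1/4} (d_0 = 0), defined on sequences with finitely many nonzero entries. Then J₀(μ) is positive definite: there exists c > 0 such that ⟨J₀(μ)C, C⟩ ≥ c‖C‖² for all finitely supported C. -/
/-- Off-diagonal Jacobi entries `d_n = n^{1/2}(n²−1/4)^{1/4}` (so `d_0 = 0`). -/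
noncomputable def dEnt (n : ℕ) : ℝ :=
  Real.sqrt n * ((n : ℝ) ^ 2 - 1 / 4) ^ ((1 : ℝ) / 4)

/-- The Jacobi operator `J₀(μ)` applied to a sequence:
`(J₀(μ)C)_n = d_{n+1}C_{n+1} + (2n+1)μ C_n + d_n C_{n−1}`. -/
noncomputable def J0 (μ : ℝ) (C : ℕ → ℂ) (n : ℕ) : ℂ :=
  (dEnt (n + 1) : ℂ) * C (n + 1) + (2 * (n : ℂ) + 1) * (μ : ℂ) * C n
    + (dEnt n : ℂ) * C (n - 1)

lemma dEnt_zero : dEnt 0 = 0 := by simp [dEnt]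

lemma dEnt_nonneg (n : ℕ) : 0 ≤ dEnt n := by
  cases n with
  | zero => simp [dEnt]
  | succ m =>
    apply mul_nonneg (Real.sqrt_nonneg _)
    apply Real.rpow_nonneg
    have hm : (0:ℝ) ≤ (m:ℝ) := Nat.cast_nonneg m
    push_cast
    nlinarith

lemma dEnt_le (n : ℕ) : dEnt n ≤ n := by
  cases n with
  | zero => simp [dEnt]
  | succ m =>
    have hm : (0:ℝ) ≤ (m:ℝ) := Nat.cast_nonneg m
    set x : ℝ := (m:ℝ) + 1 with hxdef
    have hx : (0:ℝ) ≤ x := by simp [hxdef]; linarith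
    have hcast : ((m+1 : ℕ) : ℝ) = x := by push_cast; ring
    have key : (x ^ 2) ^ ((1:ℝ)/4) = Real.sqrt x := by
      rw [Real.sqrt_eq_rpow, ← Real.rpow_natCast x 2, ← Real.rpow_mul hx]
      norm_num
    have hd : dEnt (m+1) = Real.sqrt x * (x ^ 2 - 1/4) ^ ((1:ℝ)/4) := by
      rw [dEnt, hcast]
    rw [hd, hcast]
    calc Real.sqrt x * (x ^ 2 - 1/4) ^ ((1:ℝ)/4)
        ≤ Real.sqrt x * (x ^ 2) ^ ((1:ℝ)/4) := by
          apply mul_le_mul_of_nonneg_left _ (Real.sqrt_nonneg _)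
          apply Real.rpow_le_rpow (by nlinarith) (by nlinarith) (by norm_num)
      _ = Real.sqrt x * Real.sqrt x := by rw [key]
      _ = x := Real.mul_self_sqrt hx

lemma re_mul_conj_comm (z w : ℂ) : (z * (starRingEnd ℂ) w).re = (w * (starRingEnd ℂ) z).re := by
  simp [Complex.mul_re]; ring

lemma re_mul_conj_self (z : ℂ) : (z * (starRingEnd ℂ) z).re = ‖z‖^2 := by
  rw [Complex.mul_conj, Complex.ofReal_re, Complex.normSq_eq_norm_sq]

lemma abs_re_mul_conj (z w : ℂ) : |(z * (starRingEnd ℂ) w).re| ≤ ‖z‖ * ‖w‖ := by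
  calc |(z * (starRingEnd ℂ) w).re| ≤ ‖z * (starRingEnd ℂ) w‖ := Complex.abs_re_le_norm _
    _ = ‖z‖ * ‖w‖ := by rw [norm_mul]; simp

lemma term_re (μ : ℝ) (C : ℕ → ℂ) (n : ℕ) :
    (J0 μ C n * (starRingEnd ℂ) (C n)).re
      = dEnt (n+1) * (C (n+1) * (starRingEnd ℂ) (C n)).re
        + (2*(n:ℝ)+1) * μ * ‖C n‖^2
        + dEnt n * (C (n-1) * (starRingEnd ℂ) (C n)).re := by
  have h2 : (2*(n:ℂ)+1) * (μ:ℂ) = (((2*(n:ℝ)+1)*μ : ℝ) : ℂ) := by push_cast; ring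
  have h : J0 μ C n * (starRingEnd ℂ) (C n)
      = (dEnt (n+1) : ℂ) * (C (n+1) * (starRingEnd ℂ) (C n))
        + (((2*(n:ℝ)+1)*μ : ℝ) : ℂ) * (C n * (starRingEnd ℂ) (C n))
        + (dEnt n : ℂ) * (C (n-1) * (starRingEnd ℂ) (C n)) := by
    rw [J0, ← h2]; ring
  rw [h, Complex.add_re, Complex.add_re, Complex.re_ofReal_mul, Complex.re_ofReal_mul,
    Complex.re_ofReal_mul, re_mul_conj_self]

/-- For `μ > 1`, the Jacobi operator `J₀(μ)` is positive definite on finitely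
supported sequences: `⟨J₀(μ)C, C⟩ ≥ c‖C‖²` for some `c > 0`. -/
theorem J0_positive_definite (μ : ℝ) (hμ : 1 < μ) :
    ∃ c : ℝ, 0 < c ∧ ∀ C : ℕ → ℂ, (Function.support C).Finite →
      c * ∑' n, ‖C n‖ ^ 2 ≤ (∑' n, J0 μ C n * (starRingEnd ℂ) (C n)).re := by
  refine ⟨μ - 1, by linarith, fun C hC => ?_⟩
  obtain ⟨N, hsub⟩ := hC.toFinset.exists_nat_subset_range
  have hN : ∀ n, N ≤ n → C n = 0 := by
    intro n hn
    by_contra h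
    have := Finset.mem_range.mp (hsub (hC.mem_toFinset.mpr h))
    omega
  have hNout : ∀ n ∉ Finset.range (N+1), C n = 0 := by
    intro n hn
    have h' := Finset.mem_range.not.mp hn
    exact hN n (by omega)
  have hT1 : ∑' n, ‖C n‖^2 = ∑ n ∈ Finset.range (N+1), ‖C n‖^2 :=
    tsum_eq_sum (fun n hn => by rw [hNout n hn]; simp)
  have hT2 : ∑' n, J0 μ C n * (starRingEnd ℂ) (C n)
      = ∑ n ∈ Finset.range (N+1), J0 μ C n * (starRingEnd ℂ) (C n) :=
    tsum_eq_sum (fun n hn => by rw [hNout n hn]; simp)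
  rw [hT1, hT2, Complex.re_sum]
  set f : ℕ → ℝ := fun n => dEnt (n+1) * (C (n+1) * (starRingEnd ℂ) (C n)).re with hf
  set a : ℕ → ℝ := fun n => ‖C n‖^2 with ha
  have hanonneg : ∀ n, 0 ≤ a n := fun n => by simp only [ha]; positivity
  have haN : a N = 0 := by simp [ha, hN N le_rfl]
  have hsum : ∑ n ∈ Finset.range (N+1), (J0 μ C n * (starRingEnd ℂ) (C n)).re
      = ∑ n ∈ Finset.range (N+1), f n
        + ∑ n ∈ Finset.range (N+1), (2*(n:ℝ)+1) * μ * a n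
        + ∑ n ∈ Finset.range (N+1), dEnt n * (C (n-1) * (starRingEnd ℂ) (C n)).re := by
    rw [← Finset.sum_add_distrib, ← Finset.sum_add_distrib]
    exact Finset.sum_congr rfl fun n _ => term_re μ C n
  have hfN : f N = 0 := by simp [hf, hN N le_rfl]
  have h1 : ∑ n ∈ Finset.range (N+1), f n = ∑ n ∈ Finset.range N, f n := by
    rw [Finset.sum_range_succ, hfN, add_zero]
  have h3 : ∑ n ∈ Finset.range (N+1), dEnt n * (C (n-1) * (starRingEnd ℂ) (C n)).re
      = ∑ n ∈ Finset.range N, f n := by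
    rw [Finset.sum_range_succ']
    simp only [Nat.add_sub_cancel, dEnt_zero, zero_mul, add_zero]
    exact Finset.sum_congr rfl fun i _ => by
      simp only [hf]
      rw [re_mul_conj_comm (C i) (C (i+1))]
  -- pointwise bound on f
  have hfb : ∀ n : ℕ, -(((n:ℝ)+1)/2 * (a n + a (n+1))) ≤ f n := by
    intro n
    show -(((n:ℝ)+1)/2 * (‖C n‖^2 + ‖C (n+1)‖^2))
        ≤ dEnt (n+1) * (C (n+1) * (starRingEnd ℂ) (C n)).re
    have h4 := abs_re_mul_conj (C (n+1)) (C n)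
    have hd1 : dEnt (n+1) ≤ (n:ℝ)+1 := by
      have := dEnt_le (n+1); push_cast at this; linarith
    have hd0 := dEnt_nonneg (n+1)
    have hp : (0:ℝ) ≤ ‖C n‖ := norm_nonneg _
    have hq : (0:ℝ) ≤ ‖C (n+1)‖ := norm_nonneg _
    obtain ⟨hr1, hr2⟩ := abs_le.mp h4
    nlinarith [mul_nonneg hd0 (by linarith :
        (0:ℝ) ≤ (C (n+1) * (starRingEnd ℂ) (C n)).re + ‖C (n+1)‖ * ‖C n‖),
      mul_nonneg (by linarith : (0:ℝ) ≤ (n:ℝ)+1 - dEnt (n+1)) (mul_nonneg hq hp),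
      mul_nonneg (by positivity : (0:ℝ) ≤ (n:ℝ)+1) (sq_nonneg (‖C n‖ - ‖C (n+1)‖))]
  have hA : ∑ n ∈ Finset.range N, (((n:ℝ)+1) * a (n+1)) = ∑ n ∈ Finset.range N, (n:ℝ) * a n := by
    have e1 : ∑ n ∈ Finset.range (N+1), (n:ℝ) * a n
        = ∑ i ∈ Finset.range N, ((i+1:ℕ):ℝ) * a (i+1) + ((0:ℕ):ℝ) * a 0 :=
      Finset.sum_range_succ' (fun n => (n:ℝ) * a n) N
    have e2 : ∑ n ∈ Finset.range (N+1), (n:ℝ) * a n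
        = ∑ n ∈ Finset.range N, (n:ℝ) * a n + (N:ℝ) * a N :=
      Finset.sum_range_succ _ N
    rw [haN] at e2
    calc ∑ n ∈ Finset.range N, (((n:ℝ)+1) * a (n+1))
        = ∑ i ∈ Finset.range N, ((i+1:ℕ):ℝ) * a (i+1) := by
          exact Finset.sum_congr rfl fun i _ => by push_cast; ring
      _ = ∑ n ∈ Finset.range (N+1), (n:ℝ) * a n := by rw [e1]; simp
      _ = ∑ n ∈ Finset.range N, (n:ℝ) * a n := by rw [e2]; ring
  have hFbound : -(∑ n ∈ Finset.range (N+1), (2*(n:ℝ)+1) * a n)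
      ≤ 2 * ∑ n ∈ Finset.range N, f n := by
    have h5 : ∑ n ∈ Finset.range N, -(((n:ℝ)+1)/2 * (a n + a (n+1)))
        ≤ ∑ n ∈ Finset.range N, f n := Finset.sum_le_sum fun n _ => hfb n
    have h6 : ∑ n ∈ Finset.range N, -(((n:ℝ)+1)/2 * (a n + a (n+1)))
        = -(1/2) * (∑ n ∈ Finset.range N, (((n:ℝ)+1) * a n)
            + ∑ n ∈ Finset.range N, (((n:ℝ)+1) * a (n+1))) := by
      rw [← Finset.sum_add_distrib, Finset.mul_sum]
      exact Finset.sum_congr rfl fun n _ => by ring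
    have h7 : ∑ n ∈ Finset.range N, (((n:ℝ)+1) * a n) + ∑ n ∈ Finset.range N, ((n:ℝ) * a n)
        = ∑ n ∈ Finset.range N, (2*(n:ℝ)+1) * a n := by
      rw [← Finset.sum_add_distrib]
      exact Finset.sum_congr rfl fun n _ => by ring
    have h8 : ∑ n ∈ Finset.range (N+1), (2*(n:ℝ)+1) * a n
        = ∑ n ∈ Finset.range N, (2*(n:ℝ)+1) * a n := by
      rw [Finset.sum_range_succ, haN, mul_zero, add_zero]
    rw [h6, hA, h7] at h5
    rw [h8]
    linarith
  rw [hsum, h1, h3]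
  have hdiag : ∑ n ∈ Finset.range (N+1), ((μ-1) * a n)
      ≤ ∑ n ∈ Finset.range (N+1), ((2*(n:ℝ)+1) * μ * a n - (2*(n:ℝ)+1) * a n) := by
    apply Finset.sum_le_sum
    intro n _
    have h0 := hanonneg n
    have h9 : (1:ℝ) ≤ 2*(n:ℝ)+1 := by
      have := Nat.cast_nonneg (α := ℝ) n; linarith
    nlinarith [mul_nonneg (mul_nonneg (by positivity : (0:ℝ) ≤ 2*(n:ℝ))
      (by linarith : (0:ℝ) ≤ μ - 1)) h0]
  have hsplit : ∑ n ∈ Finset.range (N+1), ((2*(n:ℝ)+1) * μ * a n - (2*(n:ℝ)+1) * a n)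
      = ∑ n ∈ Finset.range (N+1), (2*(n:ℝ)+1) * μ * a n
        - ∑ n ∈ Finset.range (N+1), (2*(n:ℝ)+1) * a n := Finset.sum_sub_distrib _ _
  have hmul : (μ - 1) * ∑ n ∈ Finset.range (N+1), ‖C n‖^2
      = ∑ n ∈ Finset.range (N+1), ((μ-1) * a n) := by
    rw [Finset.mul_sum]
  rw [hmul]
  rw [hsplit] at hdiag
  linarith
end

section
/- For μ > 0, let J₀(μ) be the Jacobi operator on ℓ²(ℕ₀) with off-diagonal entries d_n = n^{1/2}(n²−1/4)^{1/4} and diagonal entries (2n+1)μ, defined on finitely supported sequences. Then J₀(μ) is essentially self-adjoint. -/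
open Complex in
set_option maxHeartbeats 1000000 in
/-- Essential self-adjointness of the Jacobi operator `J₀(μ)` (with off-diagonal
entries `d_n` and diagonal `(2n+1)μ`), defined on finitely supported sequences,
expressed through the vanishing of both deficiency indices: for `z = ±i` the
formal eigenvalue equation `J₀(μ)C = zC` has no nonzero `ℓ²` solution. -/
theorem J0_essentially_selfAdjoint (μ : ℝ) (hμ : 0 < μ) :
    ∀ z : ℂ, (z = Complex.I ∨ z = -Complex.I) →
      ∀ C : ℕ → ℂ, Summable (fun n => ‖C n‖ ^ 2) →
        (∀ n : ℕ, (dEnt (n + 1) : ℂ) * C (n + 1) + (2 * (n : ℂ) + 1) * (μ : ℂ) * C n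
            + (dEnt n : ℂ) * C (n - 1) = z * C n) →
        C = 0 := by
  intro z hz C hsum hC
  by_contra hne
  obtain ⟨n₀, h₀⟩ := Function.ne_iff.mp hne
  simp only [Pi.zero_apply] at h₀
  set s : ℝ := ‖C n₀‖ ^ 2 with hs
  have hspos : 0 < s := by
    rw [hs]
    exact pow_pos (norm_pos_iff.mpr h₀) 2
  set W : ℕ → ℂ := fun n =>
    (dEnt n : ℂ) * (C n * (starRingEnd ℂ) (C (n - 1)) - (starRingEnd ℂ) (C n) * C (n - 1))
    with hW
  -- step relation
  have key : ∀ n : ℕ, W (n + 1) - W n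
      = (z - (starRingEnd ℂ) z) * (C n * (starRingEnd ℂ) (C n)) := by
    intro n
    have h1 := hC n
    have h2 := congrArg (starRingEnd ℂ) h1
    simp only [map_add, map_mul, Complex.conj_ofReal, map_ofNat, Complex.conj_natCast,
      map_one] at h2
    simp only [hW, Nat.add_sub_cancel]
    linear_combination (starRingEnd ℂ) (C n) * h1 - C n * h2
  have hW0 : W 0 = 0 := by simp [hW, dEnt_zero]
  -- telescoping
  have tele : ∀ N : ℕ, W (N + 1) =
      (z - (starRingEnd ℂ) z) * ∑ n ∈ Finset.range (N + 1), C n * (starRingEnd ℂ) (C n) := by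
    intro N
    induction N with
    | zero =>
      have := key 0
      rw [hW0] at this
      simpa [Finset.sum_range_one] using this
    | succ m ih =>
      rw [Finset.sum_range_succ]
      linear_combination key (m + 1) + ih
  -- norm of z - conj z is 2
  have hz2 : ‖z - (starRingEnd ℂ) z‖ = 2 := by
    rcases hz with h | h <;> subst h
    · have h2 : Complex.I - (starRingEnd ℂ) Complex.I = 2 * Complex.I := by
        rw [Complex.conj_I]; ring
      rw [h2, norm_mul, Complex.norm_I, mul_one]
      norm_num
    · have h2 : -Complex.I - (starRingEnd ℂ) (-Complex.I) = (-2) * Complex.I := by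
        simp [Complex.conj_I]; ring
      rw [h2, norm_mul, Complex.norm_I, mul_one]
      norm_num
  -- sum of C n * conj C n is real
  have hsum_eq : ∀ N : ℕ, ∑ n ∈ Finset.range (N + 1), C n * (starRingEnd ℂ) (C n)
      = ((∑ n ∈ Finset.range (N + 1), ‖C n‖ ^ 2 : ℝ) : ℂ) := by
    intro N
    push_cast
    refine Finset.sum_congr rfl fun n _ => ?_
    rw [Complex.mul_conj]
    norm_cast
    rw [Complex.normSq_eq_norm_sq]
  -- main inequality
  have main : ∀ N : ℕ, 2 * (∑ n ∈ Finset.range (N + 1), ‖C n‖ ^ 2)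
      ≤ ((N : ℝ) + 1) * (‖C N‖ ^ 2 + ‖C (N + 1)‖ ^ 2) := by
    intro N
    have hSnn : 0 ≤ ∑ n ∈ Finset.range (N + 1), ‖C n‖ ^ 2 :=
      Finset.sum_nonneg fun n _ => by positivity
    have hnorm : ‖W (N + 1)‖ = 2 * ∑ n ∈ Finset.range (N + 1), ‖C n‖ ^ 2 := by
      rw [tele N, norm_mul, hz2, hsum_eq N, Complex.norm_real, Real.norm_of_nonneg hSnn]
    have hub : ‖W (N + 1)‖ ≤ ((N : ℝ) + 1) * (‖C N‖ ^ 2 + ‖C (N + 1)‖ ^ 2) := by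
      have h1 : ‖W (N + 1)‖ ≤ dEnt (N + 1) * (2 * (‖C (N + 1)‖ * ‖C N‖)) := by
        simp only [hW, Nat.add_sub_cancel]
        rw [norm_mul, Complex.norm_real, Real.norm_of_nonneg (dEnt_nonneg _)]
        apply mul_le_mul_of_nonneg_left _ (dEnt_nonneg _)
        calc ‖C (N + 1) * (starRingEnd ℂ) (C N) - (starRingEnd ℂ) (C (N + 1)) * C N‖
            ≤ ‖C (N + 1) * (starRingEnd ℂ) (C N)‖ + ‖(starRingEnd ℂ) (C (N + 1)) * C N‖ :=
              norm_sub_le _ _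
          _ = 2 * (‖C (N + 1)‖ * ‖C N‖) := by
              simp [norm_mul]; ring
      have h2 : 2 * (‖C (N + 1)‖ * ‖C N‖) ≤ ‖C N‖ ^ 2 + ‖C (N + 1)‖ ^ 2 := by
        nlinarith [sq_nonneg (‖C N‖ - ‖C (N + 1)‖)]
      have h3 : dEnt (N + 1) ≤ (N : ℝ) + 1 := by exact_mod_cast dEnt_le (N + 1)
      have h4 : (0:ℝ) ≤ 2 * (‖C (N + 1)‖ * ‖C N‖) := by positivity
      calc ‖W (N + 1)‖ ≤ dEnt (N + 1) * (2 * (‖C (N + 1)‖ * ‖C N‖)) := h1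
        _ ≤ ((N : ℝ) + 1) * (‖C N‖ ^ 2 + ‖C (N + 1)‖ ^ 2) :=
            mul_le_mul h3 h2 h4 (by positivity)
    linarith
  -- for N ≥ n₀, partial sum ≥ s
  have hlow : ∀ N : ℕ, n₀ ≤ N → s ≤ ∑ n ∈ Finset.range (N + 1), ‖C n‖ ^ 2 := by
    intro N hN
    exact Finset.single_le_sum (f := fun n => ‖C n‖ ^ 2) (fun n _ => by positivity)
      (Finset.mem_range.mpr (Nat.lt_succ_of_le hN))
  -- so for all N, 2s/(N+n₀+1) ≤ ‖C (N+n₀)‖² + ‖C (N+n₀+1)‖²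
  have hdom : ∀ N : ℕ, 2 * s / (((N + n₀ : ℕ) : ℝ) + 1)
      ≤ ‖C (N + n₀)‖ ^ 2 + ‖C (N + n₀ + 1)‖ ^ 2 := by
    intro N
    have h1 := main (N + n₀)
    have h2 := hlow (N + n₀) (Nat.le_add_left _ _)
    have hpos : (0:ℝ) < ((N + n₀ : ℕ) : ℝ) + 1 := by positivity
    rw [div_le_iff₀ hpos]
    calc 2 * s ≤ 2 * ∑ n ∈ Finset.range (N + n₀ + 1), ‖C n‖ ^ 2 := by linarith
      _ ≤ (((N + n₀ : ℕ) : ℝ) + 1) * (‖C (N + n₀)‖ ^ 2 + ‖C (N + n₀ + 1)‖ ^ 2) := h1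
      _ = (‖C (N + n₀)‖ ^ 2 + ‖C (N + n₀ + 1)‖ ^ 2) * (((N + n₀ : ℕ) : ℝ) + 1) :=
          mul_comm _ _
  -- summability of the RHS
  have hsum2 : Summable (fun N : ℕ => ‖C (N + n₀)‖ ^ 2 + ‖C (N + n₀ + 1)‖ ^ 2) := by
    have a : Summable (fun N : ℕ => ‖C (N + n₀)‖ ^ 2) := (summable_nat_add_iff n₀).mpr hsum
    have b : Summable (fun N : ℕ => ‖C (N + (n₀ + 1))‖ ^ 2) :=
      (summable_nat_add_iff (n₀ + 1)).mpr hsum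
    simpa [← add_assoc] using a.add b
  have hsum3 : Summable (fun N : ℕ => 2 * s / (((N + n₀ : ℕ) : ℝ) + 1)) :=
    Summable.of_nonneg_of_le (fun N => by positivity) hdom hsum2
  have hsum4 : Summable (fun N : ℕ => 2 * s / ((N : ℝ) + 1)) :=
    (summable_nat_add_iff (f := fun N : ℕ => 2 * s / ((N : ℝ) + 1)) n₀).mp hsum3
  have hsum5 : Summable (fun N : ℕ => 1 / ((N : ℝ) + 1)) := by
    have h2s : (2 * s) ≠ 0 := by positivity
    refine (hsum4.mul_left (2 * s)⁻¹).congr fun N => ?_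
    field_simp
  have h6 : Summable (fun N : ℕ => 1 / (((N + 1 : ℕ) : ℝ))) := by
    refine hsum5.congr fun N => ?_
    push_cast
    ring
  exact Real.not_summable_one_div_natCast ((summable_nat_add_iff 1).mp h6)
end
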